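/- Let X ⊆ ℝ^n, Y ⊆ ℝ^m be convex compact sets with diameters at most D, and let f : X × Y → ℝ be differentiable, convex-concave, and L-smooth (as in Assumption 1). Consider the perturbed extra-gradient iteration with step size η ≤ 1/(2L): x̂_t = Π_X(x_t − η g̃_x(x_t,y_t)), ŷ_t = Π_Y(y_t + η g̃_y(x_t,y_t)), x_{t+1} = Π_X(x_t − η g̃_x(x̂_t,ŷ_t)), y_{t+1} = Π_Y(y_t + η g̃_y(x̂_t,ŷ_t)), where the perturbed gradients satisfy g̃_x(u,v) = ∇_x f(u,v) + e_x(u,v) and g̃_y(u,v) = ∇_y f(u,v) + e_y(u,v). Then for all t, x ∈ X, y ∈ Y: η⟨∇_x f(x̂_t, ŷ_t), x̂_t − x⟩ − η⟨∇_y f(x̂_t, ŷ_t), ŷ_t − y⟩ ≤ (1/2)(‖x−x_t‖² − ‖x−x_{t+1}‖² + ‖y−y_t‖² − ‖y−y_{t+1}‖²) + ηD(‖e_x(x_t,y_t)‖ + ‖e_x(x̂_t,ŷ_t)‖ + ‖e_y(x_t,y_t)‖ + ‖e_y(x̂_t,ŷ_t)‖). -/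

import Mathlib

open scoped RealInnerProductSpace

lemma proj_key {F : Type*} [NormedAddCommGroup F] [InnerProductSpace ℝ F] {K : Set F}
    (hK : Convex ℝ K) (η : ℝ) {p g v : F} (hv : v ∈ K)
    (h : ∀ z ∈ K, ‖(p - η • g) - v‖ ≤ ‖(p - η • g) - z‖) {z : F} (hz : z ∈ K) :
    η * ⟪g, v - z⟫ ≤ 1/2 * (‖z - p‖^2 - ‖z - v‖^2 - ‖p - v‖^2) := by
  have h0 : ⟪(p - η • g) - v, z - v⟫ ≤ 0 := by
    have heq : ‖(p - η • g) - v‖ = ⨅ w : K, ‖(p - η • g) - w‖ := by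
      haveI : Nonempty K := ⟨⟨v, hv⟩⟩
      exact le_antisymm (le_ciInf fun w => h w w.2)
        (ciInf_le (f := fun w : K => ‖(p - η • g) - w‖) ⟨0, fun r ⟨w, hw⟩ => hw ▸ norm_nonneg _⟩ ⟨v, hv⟩)
    exact (norm_eq_iInf_iff_real_inner_le_zero hK hv).mp heq z hz
  have hid : ⟪(p - η • g) - v, z - v⟫ =
      ⟪p - v, z - v⟫ - η * ⟪g, z - v⟫ := by
    have : (p - η • g) - v = (p - v) - η • g := by abel
    rw [this, inner_sub_left, real_inner_smul_left]
  have hnorm : ‖z - p‖^2 = ‖z - v‖^2 + 2*⟪z - v, v - p⟫ + ‖v - p‖^2 := by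
    have hzp : z - p = (z - v) + (v - p) := by abel
    rw [hzp, norm_add_sq_real]
  have h1 : ⟪p - v, z - v⟫ = -⟪z - v, v - p⟫ := by
    rw [real_inner_comm]
    have : p - v = -(v - p) := by abel
    rw [this, inner_neg_right]
  have h2 : ⟪g, v - z⟫ = -⟪g, z - v⟫ := by
    have : v - z = -(z - v) := by abel
    rw [this, inner_neg_right]
  have h3 : ‖p - v‖ = ‖v - p‖ := norm_sub_rev _ _
  rw [hid] at h0
  rw [h2, h3]
  nlinarith [h0, hnorm]

lemma quad_helper (a b c d : ℝ) : (a + b) * (c + d) ≤ a^2 + b^2 + c^2 + d^2 := by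
  nlinarith [sq_nonneg (a - c), sq_nonneg (a - d), sq_nonneg (b - c), sq_nonneg (b - d)]

lemma proj_key' {F : Type*} [NormedAddCommGroup F] [InnerProductSpace ℝ F] {K : Set F}
    (hK : Convex ℝ K) (η : ℝ) {p g v : F} (hv : v ∈ K)
    (h : ∀ z ∈ K, ‖(p + η • g) - v‖ ≤ ‖(p + η • g) - z‖) {z : F} (hz : z ∈ K) :
    -(η * ⟪g, v - z⟫) ≤ 1/2 * (‖z - p‖^2 - ‖z - v‖^2 - ‖p - v‖^2) := by
  have h' : ∀ z ∈ K, ‖(p - η • (-g)) - v‖ ≤ ‖(p - η • (-g)) - z‖ := by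
    intro z hz; simpa [sub_neg_eq_add] using h z hz
  have := proj_key hK η hv h' hz
  rw [inner_neg_left] at this
  linarith

/-- Lemma 2 of the paper: one-step progress bound for the perturbed (robust)
extra-gradient iteration. Projections are characterized as nearest points, and
`g̃ = ∇f + e` with arbitrary error vectors `e`. -/
theorem stmt15 {n m : ℕ} (X : Set (EuclideanSpace ℝ (Fin n)))
    (Y : Set (EuclideanSpace ℝ (Fin m)))
    (hX : Convex ℝ X) (hY : Convex ℝ Y) (hXc : IsCompact X) (hYc : IsCompact Y)
    (D : ℝ) (hDX : Metric.diam X ≤ D) (hDY : Metric.diam Y ≤ D)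
    (f : EuclideanSpace ℝ (Fin n) → EuclideanSpace ℝ (Fin m) → ℝ)
    (gx : EuclideanSpace ℝ (Fin n) → EuclideanSpace ℝ (Fin m) → EuclideanSpace ℝ (Fin n))
    (gy : EuclideanSpace ℝ (Fin n) → EuclideanSpace ℝ (Fin m) → EuclideanSpace ℝ (Fin m))
    (hgx : ∀ x y, HasGradientAt (fun x' => f x' y) (gx x y) x)
    (hgy : ∀ x y, HasGradientAt (fun y' => f x y') (gy x y) y)
    (hconv : ∀ y ∈ Y, ConvexOn ℝ X (fun x => f x y))
    (hconc : ∀ x ∈ X, ConcaveOn ℝ Y (fun y => f x y))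
    (L : ℝ) (hL : 0 < L)
    (hsmooth_x : ∀ x₁ ∈ X, ∀ y₁ ∈ Y, ∀ x₂ ∈ X, ∀ y₂ ∈ Y,
      ‖gx x₁ y₁ - gx x₂ y₂‖ ≤ L * (‖x₁ - x₂‖ + ‖y₁ - y₂‖))
    (hsmooth_y : ∀ x₁ ∈ X, ∀ y₁ ∈ Y, ∀ x₂ ∈ X, ∀ y₂ ∈ Y,
      ‖gy x₁ y₁ - gy x₂ y₂‖ ≤ L * (‖x₁ - x₂‖ + ‖y₁ - y₂‖))
    (η : ℝ) (hη0 : 0 < η) (hη : η ≤ 1 / (2 * L))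
    (ex : EuclideanSpace ℝ (Fin n) → EuclideanSpace ℝ (Fin m) → EuclideanSpace ℝ (Fin n))
    (ey : EuclideanSpace ℝ (Fin n) → EuclideanSpace ℝ (Fin m) → EuclideanSpace ℝ (Fin m))
    (x xh : ℕ → EuclideanSpace ℝ (Fin n)) (y yh : ℕ → EuclideanSpace ℝ (Fin m))
    (hxmem : ∀ t, x t ∈ X) (hymem : ∀ t, y t ∈ Y)
    (hxhmem : ∀ t, xh t ∈ X) (hyhmem : ∀ t, yh t ∈ Y)
    -- x̂_t = Π_X(x_t − η g̃_x(x_t, y_t))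
    (hxh : ∀ t, ∀ z ∈ X,
      ‖(x t - η • (gx (x t) (y t) + ex (x t) (y t))) - xh t‖ ≤
        ‖(x t - η • (gx (x t) (y t) + ex (x t) (y t))) - z‖)
    -- ŷ_t = Π_Y(y_t + η g̃_y(x_t, y_t))
    (hyh : ∀ t, ∀ z ∈ Y,
      ‖(y t + η • (gy (x t) (y t) + ey (x t) (y t))) - yh t‖ ≤
        ‖(y t + η • (gy (x t) (y t) + ey (x t) (y t))) - z‖)
    -- x_{t+1} = Π_X(x_t − η g̃_x(x̂_t, ŷ_t))
    (hxn : ∀ t, ∀ z ∈ X,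
      ‖(x t - η • (gx (xh t) (yh t) + ex (xh t) (yh t))) - x (t + 1)‖ ≤
        ‖(x t - η • (gx (xh t) (yh t) + ex (xh t) (yh t))) - z‖)
    -- y_{t+1} = Π_Y(y_t + η g̃_y(x̂_t, ŷ_t))
    (hyn : ∀ t, ∀ z ∈ Y,
      ‖(y t + η • (gy (xh t) (yh t) + ey (xh t) (yh t))) - y (t + 1)‖ ≤
        ‖(y t + η • (gy (xh t) (yh t) + ey (xh t) (yh t))) - z‖) :
    ∀ t, ∀ x' ∈ X, ∀ y' ∈ Y,
      η * ⟪gx (xh t) (yh t), xh t - x'⟫ - η * ⟪gy (xh t) (yh t), yh t - y'⟫ ≤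
        1 / 2 * (‖x' - x t‖ ^ 2 - ‖x' - x (t + 1)‖ ^ 2 +
          ‖y' - y t‖ ^ 2 - ‖y' - y (t + 1)‖ ^ 2) +
        η * D * (‖ex (x t) (y t)‖ + ‖ex (xh t) (yh t)‖ +
          ‖ey (x t) (y t)‖ + ‖ey (xh t) (yh t)‖) := by
  intro t x' hx' y' hy'
  have hD0 : (0:ℝ) ≤ D := le_trans Metric.diam_nonneg hDX
  have hdX : ∀ a ∈ X, ∀ b ∈ X, ‖a - b‖ ≤ D := by
    intro a ha b hb
    rw [← dist_eq_norm]
    exact le_trans (Metric.dist_le_diam_of_mem hXc.isBounded ha hb) hDX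
  have hdY : ∀ a ∈ Y, ∀ b ∈ Y, ‖a - b‖ ≤ D := by
    intro a ha b hb
    rw [← dist_eq_norm]
    exact le_trans (Metric.dist_le_diam_of_mem hYc.isBounded ha hb) hDY
  have hηL : η * L ≤ 1/2 := by
    rw [le_div_iff₀ (by positivity)] at hη
    nlinarith
  -- projection inequalities
  have A := proj_key hX η (hxmem (t+1)) (hxn t) hx'
  have B := proj_key hX η (hxhmem t) (hxh t) (hxmem (t+1))
  have C := proj_key' hY η (hymem (t+1)) (hyn t) hy'
  have Dy := proj_key' hY η (hyhmem t) (hyh t) (hymem (t+1))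
  -- abbreviations for scalars
  set a := ‖xh t - x t‖ with ha_def
  set b := ‖yh t - y t‖ with hb_def
  set c := ‖xh t - x (t+1)‖ with hc_def
  set d := ‖yh t - y (t+1)‖ with hd_def
  have ha0 : 0 ≤ a := norm_nonneg _
  have hb0 : 0 ≤ b := norm_nonneg _
  have hc0 : 0 ≤ c := norm_nonneg _
  have hd0 : 0 ≤ d := norm_nonneg _
  -- inner product decompositions
  have e1 : ⟪gx (xh t) (yh t), xh t - x'⟫ =
      ⟪gx (xh t) (yh t) + ex (xh t) (yh t), x (t+1) - x'⟫ +
      ⟪gx (x t) (y t) + ex (x t) (y t), xh t - x (t+1)⟫ +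
      ⟪gx (xh t) (yh t) - gx (x t) (y t), xh t - x (t+1)⟫ +
      ⟪ex (xh t) (yh t), x' - x (t+1)⟫ - ⟪ex (x t) (y t), xh t - x (t+1)⟫ := by
    simp only [inner_add_left, inner_sub_left, inner_sub_right]
    ring
  have e2 : ⟪gy (xh t) (yh t), yh t - y'⟫ =
      ⟪gy (xh t) (yh t) + ey (xh t) (yh t), y (t+1) - y'⟫ +
      ⟪gy (x t) (y t) + ey (x t) (y t), yh t - y (t+1)⟫ +
      ⟪gy (xh t) (yh t) - gy (x t) (y t), yh t - y (t+1)⟫ +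
      ⟪ey (xh t) (yh t), y' - y (t+1)⟫ - ⟪ey (x t) (y t), yh t - y (t+1)⟫ := by
    simp only [inner_add_left, inner_sub_left, inner_sub_right]
    ring
  -- error bounds
  have bE1 : ⟪ex (xh t) (yh t), x' - x (t+1)⟫ ≤ ‖ex (xh t) (yh t)‖ * D :=
    le_trans (real_inner_le_norm _ _)
      (mul_le_mul_of_nonneg_left (hdX _ hx' _ (hxmem (t+1))) (norm_nonneg _))
  have bE2 : -⟪ex (x t) (y t), xh t - x (t+1)⟫ ≤ ‖ex (x t) (y t)‖ * D := by
    have := abs_real_inner_le_norm (ex (x t) (y t)) (xh t - x (t+1))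
    have h2 := mul_le_mul_of_nonneg_left (hdX _ (hxhmem t) _ (hxmem (t+1))) (norm_nonneg (ex (x t) (y t)))
    have := neg_le_of_abs_le this
    linarith
  have bE3 : -⟪ey (xh t) (yh t), y' - y (t+1)⟫ ≤ ‖ey (xh t) (yh t)‖ * D := by
    have := abs_real_inner_le_norm (ey (xh t) (yh t)) (y' - y (t+1))
    have h2 := mul_le_mul_of_nonneg_left (hdY _ hy' _ (hymem (t+1))) (norm_nonneg (ey (xh t) (yh t)))
    have := neg_le_of_abs_le this
    linarith
  have bE4 : ⟪ey (x t) (y t), yh t - y (t+1)⟫ ≤ ‖ey (x t) (y t)‖ * D :=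
    le_trans (real_inner_le_norm _ _)
      (mul_le_mul_of_nonneg_left (hdY _ (hyhmem t) _ (hymem (t+1))) (norm_nonneg _))
  -- smoothness bounds
  have bS1 : ⟪gx (xh t) (yh t) - gx (x t) (y t), xh t - x (t+1)⟫ ≤ L * (a + b) * c := by
    refine le_trans (real_inner_le_norm _ _) ?_
    have h1 := hsmooth_x _ (hxhmem t) _ (hyhmem t) _ (hxmem t) _ (hymem t)
    exact mul_le_mul_of_nonneg_right h1 hc0
  have bS2 : -⟪gy (xh t) (yh t) - gy (x t) (y t), yh t - y (t+1)⟫ ≤ L * (a + b) * d := by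
    have h1 := abs_real_inner_le_norm (gy (xh t) (yh t) - gy (x t) (y t)) (yh t - y (t+1))
    have h2 := hsmooth_y _ (hxhmem t) _ (hyhmem t) _ (hxmem t) _ (hymem t)
    have h3 := neg_le_of_abs_le h1
    have h4 : ‖gy (xh t) (yh t) - gy (x t) (y t)‖ * d ≤ L * (a + b) * d :=
      mul_le_mul_of_nonneg_right h2 hd0
    linarith
  -- combined smoothness bound
  have hsm : η * (L * (a + b) * c) + η * (L * (a + b) * d) ≤
      1/2 * (a^2 + b^2 + c^2 + d^2) := by
    have e : η * (L * (a + b) * c) + η * (L * (a + b) * d) =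
        (η * L) * ((a + b) * (c + d)) := by ring
    have k1 : (η * L) * ((a + b) * (c + d)) ≤ 1/2 * ((a + b) * (c + d)) :=
      mul_le_mul_of_nonneg_right hηL
        (mul_nonneg (add_nonneg ha0 hb0) (add_nonneg hc0 hd0))
    have k2 : (a + b) * (c + d) ≤ a^2 + b^2 + c^2 + d^2 := quad_helper a b c d
    rw [e]
    linarith
  -- rewrite goal
  rw [e1, e2]
  -- norm reversals to align with A, B, C, Dy
  have r1 : ‖x t - x (t+1)‖ = ‖x (t+1) - x t‖ := norm_sub_rev _ _
  have r2 : ‖x (t+1) - xh t‖ = c := norm_sub_rev _ _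
  have r3 : ‖x t - xh t‖ = a := norm_sub_rev _ _
  have r4 : ‖y t - y (t+1)‖ = ‖y (t+1) - y t‖ := norm_sub_rev _ _
  have r5 : ‖y (t+1) - yh t‖ = d := norm_sub_rev _ _
  have r6 : ‖y t - yh t‖ = b := norm_sub_rev _ _
  have q1 : ‖x t - x (t+1)‖^2 = ‖x (t+1) - x t‖^2 := by rw [r1]
  have q2 : ‖x (t+1) - xh t‖^2 = c^2 := by rw [r2]
  have q3 : ‖x t - xh t‖^2 = a^2 := by rw [r3]
  have q4 : ‖y t - y (t+1)‖^2 = ‖y (t+1) - y t‖^2 := by rw [r4]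
  have q5 : ‖y (t+1) - yh t‖^2 = d^2 := by rw [r5]
  have q6 : ‖y t - yh t‖^2 = b^2 := by rw [r6]
  have sE1 := mul_le_mul_of_nonneg_left bE1 hη0.le
  have sE2 := mul_le_mul_of_nonneg_left bE2 hη0.le
  have sE3 := mul_le_mul_of_nonneg_left bE3 hη0.le
  have sE4 := mul_le_mul_of_nonneg_left bE4 hη0.le
  have sS1 := mul_le_mul_of_nonneg_left bS1 hη0.le
  have sS2 := mul_le_mul_of_nonneg_left bS2 hη0.le
  linarith [A, B, C, Dy, hsm, q1, q2, q3, q4, q5, q6, sE1, sE2, sE3, sE4, sS1, sS2]
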